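/- The function R(x) = Er(x) − x·f₁(x) is continuous on [0,∞). -/

import Mathlib

open Filter MeasureTheory Set

/-- The auxiliary real function `g(t) = ({t}² − {t} + t − t²)/2`. -/
noncomputable def stmt4gR (t : ℝ) : ℝ := ((Int.fract t) ^ 2 - Int.fract t + t - t ^ 2) / 2

/-- Its complex-valued version. -/
noncomputable def stmt4g (t : ℝ) : ℂ := ((stmt4gR t : ℝ) : ℂ)

lemma stmt4gR_cont : Continuous stmt4gR := by
  have h : Continuous fun t : ℝ => (Int.fract t) ^ 2 - Int.fract t := by
    have h0 : ContinuousOn (fun y : ℝ => y ^ 2 - y) (Set.Icc 0 1) :=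
      (Continuous.continuousOn (by continuity))
    have := ContinuousOn.comp_fract'' h0 (by norm_num)
    exact this
  have : Continuous fun t : ℝ =>
      ((Int.fract t) ^ 2 - Int.fract t + t - t ^ 2) := by
    exact (h.add continuous_id).sub (continuous_pow 2)
  exact this.div_const 2

lemma stmt4g_cont : Continuous stmt4g :=
  Complex.continuous_ofReal.comp stmt4gR_cont

lemma stmt4g_zero {t : ℝ} (h0 : 0 ≤ t) (h1 : t < 1) : stmt4g t = 0 := by
  have : stmt4gR t = 0 := by
    rw [stmt4gR, Int.fract_eq_self.mpr ⟨h0, h1⟩]; ring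
  rw [stmt4g, this, Complex.ofReal_zero]

lemma stmt4_gauss (M : ℕ) : (∑ m ∈ Finset.Icc 1 M, (m : ℝ)) * 2 = M * (M + 1) := by
  induction M with
  | zero => simp
  | succ n ih =>
    rw [Finset.sum_Icc_succ_top (Nat.succ_le_succ (Nat.zero_le n))]
    push_cast
    push_cast at ih
    ring_nf
    ring_nf at ih
    linarith

lemma stmt4_keyR (t : ℝ) (ht : 0 ≤ t) :
    (∑ m ∈ Finset.Icc 1 ⌊t⌋₊, (m : ℝ)) = stmt4gR t - t * Int.fract t + t ^ 2 := by
  have hf : Int.fract t = t - (⌊t⌋₊ : ℝ) := by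
    rw [Int.fract]
    congr 1
    exact (natCast_floor_eq_intCast_floor ht).symm
  have hg := stmt4_gauss ⌊t⌋₊
  rw [stmt4gR, hf]
  linear_combination hg / 2

lemma stmt4_keyC (t : ℝ) (ht : 0 ≤ t) :
    (∑ m ∈ Finset.Icc 1 ⌊t⌋₊, (m : ℂ))
      = stmt4g t - (t : ℂ) * ((Int.fract t : ℝ) : ℂ) + (t : ℂ) ^ 2 := by
  have h := stmt4_keyR t ht
  have h2 : (∑ m ∈ Finset.Icc 1 ⌊t⌋₊, (m : ℂ))
      = (((∑ m ∈ Finset.Icc 1 ⌊t⌋₊, (m : ℝ)) : ℝ) : ℂ) := by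
    push_cast; rfl
  rw [h2, h, stmt4g]
  push_cast
  ring

/-- Dirichlet double-sum swap. -/
lemma stmt4_swap (F : ℕ → ℕ → ℂ) (N : ℕ) :
    ∑ n ∈ Finset.Icc 1 N, ∑ d ∈ n.divisors, F d (n / d)
      = ∑ d ∈ Finset.Icc 1 N, ∑ e ∈ Finset.Icc 1 (N / d), F d e := by
  have h1 : ∑ n ∈ Finset.Icc 1 N, ∑ d ∈ n.divisors, F d (n / d)
      = ∑ n ∈ Finset.Icc 1 N, ∑ p ∈ n.divisorsAntidiagonal, F p.1 p.2 :=
    Finset.sum_congr rfl fun n _ => (Nat.sum_divisorsAntidiagonal F).symm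
  have hdisj : (↑(Finset.Icc 1 N) : Set ℕ).PairwiseDisjoint Nat.divisorsAntidiagonal := by
    intro m _ n _ hmn
    simp only [Function.onFun, Finset.disjoint_left]
    intro p hpm hpn
    rw [Nat.mem_divisorsAntidiagonal] at hpm hpn
    exact hmn (hpm.1.symm.trans hpn.1)
  rw [h1, ← Finset.sum_biUnion hdisj]
  refine Finset.sum_finset_product' _ _ _ fun p => ?_
  simp only [Finset.mem_biUnion, Nat.mem_divisorsAntidiagonal, Finset.mem_Icc]
  constructor
  · rintro ⟨n, ⟨h1n, hnN⟩, hpn, -⟩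
    have hp1 : 0 < p.1 := by
      rcases Nat.eq_zero_or_pos p.1 with h | h
      · exfalso; rw [h, zero_mul] at hpn; omega
      · exact h
    have hp2 : 0 < p.2 := by
      rcases Nat.eq_zero_or_pos p.2 with h | h
      · exfalso; rw [h, mul_zero] at hpn; omega
      · exact h
    refine ⟨⟨hp1, ?_⟩, hp2, ?_⟩
    · calc p.1 ≤ p.1 * p.2 := Nat.le_mul_of_pos_right _ hp2
        _ = n := hpn
        _ ≤ N := hnN
    · rw [Nat.le_div_iff_mul_le hp1]
      calc p.2 * p.1 = p.1 * p.2 := mul_comm _ _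
        _ = n := hpn
        _ ≤ N := hnN
  · rintro ⟨⟨hp1, _⟩, hp2, hp2d⟩
    refine ⟨p.1 * p.2, ⟨Nat.one_le_iff_ne_zero.mpr ?_, ?_⟩, rfl, ?_⟩
    · positivity
    · rw [Nat.le_div_iff_mul_le hp1] at hp2d
      calc p.1 * p.2 = p.2 * p.1 := mul_comm _ _
        _ ≤ N := hp2d
    · positivity

/-- The function `R(x) = Er(x) − x·f₁(x)` is continuous on `[0,∞)`. -/
theorem stmt_4
    (a : ℕ → ℂ) (α : ℂ)
    (ha : Tendsto (fun N : ℕ => ∑ n ∈ Finset.Icc 1 N, a n / (n : ℂ) ^ 2)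
      atTop (nhds (2 * α)))
    (b : ℕ → ℂ)
    (hb : ∀ n : ℕ, 0 < n → b n = ∑ d ∈ n.divisors, a d * ((n / d : ℕ) : ℂ))
    (Er : ℝ → ℂ)
    (hEr : ∀ x : ℝ, 0 ≤ x →
      Er x = (∑ n ∈ Finset.Icc 1 ⌊x⌋₊, b n) - α * (x : ℂ) ^ 2)
    (f₁ : ℝ → ℂ)
    (hf₁ : ∀ x : ℝ, 0 ≤ x →
      Tendsto (fun N : ℕ => -∑ n ∈ Finset.Icc 1 N,
          a n / (n : ℂ) * ((Int.fract (x / (n : ℝ)) : ℝ) : ℂ))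
        atTop (nhds (f₁ x)))
    (R : ℝ → ℂ)
    (hR : ∀ x : ℝ, 0 ≤ x → R x = Er x - (x : ℂ) * f₁ x) :
    ContinuousOn R (Set.Ici 0) := by
  -- The main pointwise formula.
  have main : ∀ x : ℝ, 0 ≤ x →
      R x = α * (x : ℂ) ^ 2 + ∑ d ∈ Finset.Icc 1 ⌊x⌋₊, a d * stmt4g (x / d) := by
    intro x hx
    set K := ⌊x⌋₊ with hKdef
    set S : ℕ → ℂ := fun N => ∑ n ∈ Finset.Icc 1 N, a n / (n : ℂ) ^ 2 with hS
    set C : ℂ := -∑ n ∈ Finset.Icc 1 K,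
        a n / (n : ℂ) * ((Int.fract (x / (n : ℝ)) : ℝ) : ℂ) with hC
    have hsplit : ∀ (f : ℕ → ℂ) (N : ℕ), K ≤ N →
        ∑ n ∈ Finset.Icc 1 N, f n
          = ∑ n ∈ Finset.Icc 1 K, f n + ∑ n ∈ Finset.Ioc K N, f n := by
      intro f N hN
      have e1 : Finset.Icc 1 N = Finset.Ioc 0 N := by ext i; simp; omega
      have e2 : Finset.Icc 1 K = Finset.Ioc 0 K := by ext i; simp; omega
      rw [e1, e2, Finset.sum_Ioc_consecutive f (Nat.zero_le K) hN]
    have htail : ∀ N : ℕ, K ≤ N →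
        ∑ n ∈ Finset.Ioc K N, a n / (n : ℂ) * ((Int.fract (x / (n : ℝ)) : ℝ) : ℂ)
          = (x : ℂ) * (S N - S K) := by
      intro N hN
      have hT : S N - S K = ∑ n ∈ Finset.Ioc K N, a n / (n : ℂ) ^ 2 := by
        show (∑ n ∈ Finset.Icc 1 N, a n / (n : ℂ) ^ 2)
            - (∑ n ∈ Finset.Icc 1 K, a n / (n : ℂ) ^ 2)
          = ∑ n ∈ Finset.Ioc K N, a n / (n : ℂ) ^ 2
        rw [hsplit (fun n => a n / (n : ℂ) ^ 2) N hN]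
        ring
      rw [hT, Finset.mul_sum]
      refine Finset.sum_congr rfl fun n hn => ?_
      obtain ⟨hKn, -⟩ := Finset.mem_Ioc.mp hn
      have hn0 : 0 < n := lt_of_le_of_lt (Nat.zero_le K) hKn
      have hn0R : (0 : ℝ) < n := by exact_mod_cast hn0
      have hxn : x < n := (Nat.floor_lt hx).mp hKn
      have hfr : Int.fract (x / (n : ℝ)) = x / (n : ℝ) :=
        Int.fract_eq_self.mpr ⟨div_nonneg hx hn0R.le, (div_lt_one hn0R).mpr hxn⟩
      rw [hfr]
      have hnC : ((n : ℂ)) ≠ 0 := Nat.cast_ne_zero.mpr hn0.ne'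
      push_cast
      field_simp
    have hf1x : f₁ x = C - (x : ℂ) * (2 * α - S K) := by
      refine tendsto_nhds_unique (hf₁ x hx) ?_
      have h2 : Tendsto (fun N : ℕ => C - (x : ℂ) * (S N - S K)) atTop
          (nhds (C - (x : ℂ) * (2 * α - S K))) :=
        tendsto_const_nhds.sub ((ha.sub tendsto_const_nhds).const_mul _)
      refine h2.congr' ?_
      filter_upwards [eventually_ge_atTop K] with N hN
      rw [hsplit (fun n => a n / (n : ℂ) * ((Int.fract (x / (n : ℝ)) : ℝ) : ℂ)) N hN,
        neg_add, htail N hN, hC]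
      ring
    have hbsum : ∑ n ∈ Finset.Icc 1 K, b n
        = ∑ d ∈ Finset.Icc 1 K, a d * (∑ e ∈ Finset.Icc 1 (K / d), (e : ℂ)) := by
      rw [Finset.sum_congr rfl fun n hn => hb n (Finset.mem_Icc.mp hn).1]
      rw [stmt4_swap (fun d e => a d * (e : ℂ)) K]
      exact Finset.sum_congr rfl fun d _ => (Finset.mul_sum _ _ _).symm
    have hkey : (∑ d ∈ Finset.Icc 1 K, a d * (∑ e ∈ Finset.Icc 1 (K / d), (e : ℂ)))
        + (x : ℂ) * (∑ n ∈ Finset.Icc 1 K,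
            a n / (n : ℂ) * ((Int.fract (x / (n : ℝ)) : ℝ) : ℂ))
        - (x : ℂ) ^ 2 * S K
        = ∑ d ∈ Finset.Icc 1 K, a d * stmt4g (x / d) := by
      rw [hS, Finset.mul_sum, Finset.mul_sum, ← Finset.sum_add_distrib,
        ← Finset.sum_sub_distrib]
      refine Finset.sum_congr rfl fun d hd => ?_
      obtain ⟨hd1, -⟩ := Finset.mem_Icc.mp hd
      have hd0 : (0 : ℝ) < d := by exact_mod_cast hd1
      have hKd : K / d = ⌊x / (d : ℝ)⌋₊ := (Nat.floor_div_natCast x d).symm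
      have ht : 0 ≤ x / (d : ℝ) := div_nonneg hx hd0.le
      have hkC := stmt4_keyC (x / (d : ℝ)) ht
      have hcast : ((x / (d : ℝ) : ℝ) : ℂ) = (x : ℂ) / (d : ℂ) := by push_cast; ring
      rw [hKd]
      rw [hcast] at hkC
      linear_combination a d * hkC
    rw [hR x hx, hEr x hx, hf1x, hbsum]
    rw [hC]
    linear_combination hkey
  -- Extension to any `M` with `x < M`.
  have mainM : ∀ (M : ℕ) (x : ℝ), 0 ≤ x → x < M →
      R x = α * (x : ℂ) ^ 2 + ∑ d ∈ Finset.Icc 1 M, a d * stmt4g (x / d) := by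
    intro M x hx hxM
    rw [main x hx]
    congr 1
    refine Finset.sum_subset (Finset.Icc_subset_Icc_right ((Nat.floor_lt hx).mpr hxM).le)
      fun d hdM hdK => ?_
    simp only [Finset.mem_Icc] at hdM hdK
    have hd1 : 1 ≤ d := hdM.1
    have hfd : ⌊x⌋₊ < d := by omega
    have hxd : x < d := by
      calc x < ⌊x⌋₊ + 1 := Nat.lt_floor_add_one x
        _ ≤ d := by exact_mod_cast Nat.succ_le_of_lt hfd
    have hd0 : (0 : ℝ) < d := by exact_mod_cast hd1
    rw [stmt4g_zero (div_nonneg hx hd0.le) ((div_lt_one hd0).mpr hxd), mul_zero]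
  -- Continuity.
  intro x₀ hx₀
  rw [Set.mem_Ici] at hx₀
  set M := ⌊x₀⌋₊ + 1 with hM
  have hx₀M : x₀ < M := by
    have := Nat.lt_floor_add_one x₀
    push_cast
    exact_mod_cast this
  have hF : Continuous (fun x : ℝ =>
      α * (x : ℂ) ^ 2 + ∑ d ∈ Finset.Icc 1 M, a d * stmt4g (x / d)) := by
    refine Continuous.add (continuous_const.mul (Complex.continuous_ofReal.pow 2)) ?_
    refine continuous_finset_sum _ fun d _ => ?_
    exact continuous_const.mul (stmt4g_cont.comp (continuous_id.div_const _))
  refine (hF.continuousAt.continuousWithinAt).congr_of_eventuallyEq ?_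
    (mainM M x₀ hx₀ hx₀M)
  have hIio : Set.Iio ((M : ℝ)) ∈ nhdsWithin x₀ (Set.Ici 0) :=
    nhdsWithin_le_nhds (Iio_mem_nhds hx₀M)
  filter_upwards [hIio, self_mem_nhdsWithin] with x hx1 hx2
  exact mainM M x hx2 hx1
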